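/- Let R be a commutative ring, and let a, b ∈ R, and d, e : Fin n → R satisfy: (i) a = b + ∑ j, d j; (ii) for every j, (e j) * (d j) = a * (d j); (iii) for j ≠ j', (d j) * (d j') = 0. Then for every k ≥ 0, a^k = b^k + ∑ j, ∑_{k'=0}^{k-1} (e j)^{k'} * b^{k-1-k'} * (d j). -/
import Mathlib


/-- Abstract form of the ψ_min comparison: if `a = b + ∑ d j`, `e j * d j = a * d j`, and
`d j * d j' = 0` for `j ≠ j'`, then
`a ^ k = b ^ k + ∑ j, ∑_{k' < k} (e j) ^ k' * b ^ (k - 1 - k') * d j` for all `k ≥ 0`. -/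
theorem stmt_9 {R : Type*} [CommRing R] (n : ℕ) (a b : R) (d e : Fin n → R)
    (h1 : a = b + ∑ j, d j)
    (h2 : ∀ j, e j * d j = a * d j)
    (h3 : ∀ j j', j ≠ j' → d j * d j' = 0) :
    ∀ k : ℕ, a ^ k =
      b ^ k + ∑ j, ∑ k' ∈ Finset.range k, (e j) ^ k' * b ^ (k - 1 - k') * d j := by
  have key : ∀ (k : ℕ) (j : Fin n), a ^ k * d j = e j ^ k * d j := by
    intro k j
    induction k with
    | zero => simp
    | succ k ih =>
      calc a ^ (k + 1) * d j = a ^ k * (a * d j) := by ring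
        _ = a ^ k * (e j * d j) := by rw [h2]
        _ = e j * (a ^ k * d j) := by ring
        _ = e j * (e j ^ k * d j) := by rw [ih]
        _ = e j ^ (k + 1) * d j := by ring
  intro k
  induction k with
  | zero => simp
  | succ k ih =>
    have hsum : ∀ j, (∑ k' ∈ Finset.range k, e j ^ k' * b ^ (k - 1 - k') * d j) * b
        = ∑ k' ∈ Finset.range k, e j ^ k' * b ^ (k - k') * d j := by
      intro j
      rw [Finset.sum_mul]
      refine Finset.sum_congr rfl fun k' hk' => ?_
      have hk' : k' < k := Finset.mem_range.mp hk'
      have : k - 1 - k' + 1 = k - k' := by omega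
      rw [← this, pow_succ]; ring
    have hexp : ∀ j, ∑ k' ∈ Finset.range (k + 1), e j ^ k' * b ^ (k + 1 - 1 - k') * d j
        = (∑ k' ∈ Finset.range k, e j ^ k' * b ^ (k - k') * d j) + e j ^ k * d j := by
      intro j
      rw [Finset.sum_range_succ]
      simp [Nat.sub_self]
    calc a ^ (k + 1) = a ^ k * b + ∑ j, a ^ k * d j := by
          rw [pow_succ]; nth_rewrite 2 [h1]
          rw [mul_add, Finset.mul_sum]
      _ = (b ^ k + ∑ j, ∑ k' ∈ Finset.range k, e j ^ k' * b ^ (k - 1 - k') * d j) * b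
            + ∑ j, e j ^ k * d j := by rw [← ih]; simp [key]
      _ = b ^ (k + 1) + ∑ j, ((∑ k' ∈ Finset.range k, e j ^ k' * b ^ (k - k') * d j)
            + e j ^ k * d j) := by
          rw [add_mul, Finset.sum_mul, Finset.sum_add_distrib, pow_succ]
          simp only [hsum]
          ring
      _ = _ := by rw [Finset.sum_congr rfl fun j _ => (hexp j).symm]
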